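/- arXiv:1604.06009 — 3 statements merged into one kernel-verified Lean document; each statement's English description precedes it below -/
import Mathlib

section
/- Let L be a finite lattice, Θ a lattice congruence of L, and x ∈ L the greatest element of its Θ-class. Then for every Θ-class [y]_Θ such that ([x]_Θ, [y]_Θ) is a covering pair of the quotient lattice L/Θ, there exists a unique y' ∈ [y]_Θ with x ⋖ y' in L. -/
universe u v

/-- A lattice congruence on a lattice `L`: an equivalence relation compatible with
meets and joins. -/
structure LatticeCon' (L : Type u) [Lattice L] : Type u where
  r : L → L → Prop
  refl : ∀ x, r x x
  symm : ∀ x y, r x y → r y x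
  trans : ∀ x y z, r x y → r y z → r x z
  inf_congr : ∀ x y z, r x y → r (x ⊓ z) (y ⊓ z)
  sup_congr : ∀ x y z, r x y → r (x ⊔ z) (y ⊔ z)

namespace LatticeCon'

variable {L : Type u} [Lattice L]

theorem ext' {c d : LatticeCon' L} (h : ∀ x y, c.r x y ↔ d.r x y) : c = d := by
  have hr : c.r = d.r := funext fun x => funext fun y => propext (h x y)
  cases c; cases d
  subst hr
  rfl

/-- Congruences are ordered by refinement. -/
instance : PartialOrder (LatticeCon' L) where
  le c d := ∀ x y : L, c.r x y → d.r x y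
  le_refl c := fun _ _ h => h
  le_trans a b c hab hbc := fun x y h => hbc x y (hab x y h)
  le_antisymm a b hab hba := ext' fun x y => ⟨hab x y, hba x y⟩

/-- The join of two congruences. -/
def conSup (c d : LatticeCon' L) : LatticeCon' L where
  r x y := ∀ e : LatticeCon' L, c ≤ e → d ≤ e → e.r x y
  refl := fun x e _ _ => e.refl x
  symm := fun x y h e hc hd => e.symm x y (h e hc hd)
  trans := fun x y z h h' e hc hd => e.trans x y z (h e hc hd) (h' e hc hd)
  inf_congr := fun x y z h e hc hd => e.inf_congr x y z (h e hc hd)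
  sup_congr := fun x y z h e hc hd => e.sup_congr x y z (h e hc hd)

/-- The meet of two congruences (their intersection). -/
def conInf (c d : LatticeCon' L) : LatticeCon' L where
  r x y := c.r x y ∧ d.r x y
  refl := fun x => ⟨c.refl x, d.refl x⟩
  symm := fun x y h => ⟨c.symm x y h.1, d.symm x y h.2⟩
  trans := fun x y z h h' => ⟨c.trans x y z h.1 h'.1, d.trans x y z h.2 h'.2⟩
  inf_congr := fun x y z h => ⟨c.inf_congr x y z h.1, d.inf_congr x y z h.2⟩
  sup_congr := fun x y z h => ⟨c.sup_congr x y z h.1, d.sup_congr x y z h.2⟩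

/-- The lattice `Con(L)` of congruences of `L`. -/
instance : Lattice (LatticeCon' L) where
  sup := conSup
  le_sup_left c d := fun x y h e hc _ => hc x y h
  le_sup_right c d := fun x y h e _ hd => hd x y h
  sup_le a b c hac hbc := fun x y h => h c hac hbc
  inf := conInf
  inf_le_left c d := fun _ _ h => h.1
  inf_le_right c d := fun _ _ h => h.2
  le_inf a b c hab hac := fun x y h => ⟨hab x y h, hac x y h⟩

/-- `conGen a b` is the finest lattice congruence identifying `a` and `b`. -/
def conGen (a b : L) : LatticeCon' L where
  r x y := ∀ e : LatticeCon' L, e.r a b → e.r x y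
  refl := fun x e _ => e.refl x
  symm := fun x y h e he => e.symm x y (h e he)
  trans := fun x y z h h' e he => e.trans x y z (h e he) (h' e he)
  inf_congr := fun x y z h e he => e.inf_congr x y z (h e he)
  sup_congr := fun x y z h e he => e.sup_congr x y z (h e he)

/-- The setoid underlying a lattice congruence. -/
def setoid (c : LatticeCon' L) : Setoid L :=
  ⟨c.r, ⟨c.refl, fun h => c.symm _ _ h, fun h h' => c.trans _ _ _ h h'⟩⟩

/-- The quotient of `L` by a lattice congruence. -/
def Quo (c : LatticeCon' L) : Type u := Quotient c.setoid

/-- The canonical quotient map `L → L/Θ`. -/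
def mkQ (c : LatticeCon' L) (x : L) : c.Quo := Quotient.mk c.setoid x

variable (c : LatticeCon' L)

theorem sup_congr₂ {x x' y y' : L} (hx : c.r x x') (hy : c.r y y') :
    c.r (x ⊔ y) (x' ⊔ y') := by
  have h1 : c.r (x ⊔ y) (x' ⊔ y) := c.sup_congr x x' y hx
  have h2 : c.r (y ⊔ x') (y' ⊔ x') := c.sup_congr y y' x' hy
  rw [sup_comm y x', sup_comm y' x'] at h2
  exact c.trans _ _ _ h1 h2

theorem inf_congr₂ {x x' y y' : L} (hx : c.r x x') (hy : c.r y y') :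
    c.r (x ⊓ y) (x' ⊓ y') := by
  have h1 : c.r (x ⊓ y) (x' ⊓ y) := c.inf_congr x x' y hx
  have h2 : c.r (y ⊓ x') (y' ⊓ x') := c.inf_congr y y' x' hy
  rw [inf_comm y x', inf_comm y' x'] at h2
  exact c.trans _ _ _ h1 h2

instance : Max c.Quo :=
  ⟨Quotient.lift₂ (fun x y => c.mkQ (x ⊔ y))
    (fun _ _ _ _ hx hy => Quotient.sound (c.sup_congr₂ hx hy))⟩

instance : Min c.Quo :=
  ⟨Quotient.lift₂ (fun x y => c.mkQ (x ⊓ y))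
    (fun _ _ _ _ hx hy => Quotient.sound (c.inf_congr₂ hx hy))⟩

theorem quo_sup_comm (a b : c.Quo) : a ⊔ b = b ⊔ a :=
  Quotient.inductionOn₂ a b fun x y => congrArg (Quotient.mk c.setoid) (sup_comm x y)

theorem quo_sup_assoc (a b d : c.Quo) : a ⊔ b ⊔ d = a ⊔ (b ⊔ d) :=
  Quotient.inductionOn₃ a b d fun x y z => congrArg (Quotient.mk c.setoid) (sup_assoc x y z)

theorem quo_inf_comm (a b : c.Quo) : a ⊓ b = b ⊓ a :=
  Quotient.inductionOn₂ a b fun x y => congrArg (Quotient.mk c.setoid) (inf_comm x y)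

theorem quo_inf_assoc (a b d : c.Quo) : a ⊓ b ⊓ d = a ⊓ (b ⊓ d) :=
  Quotient.inductionOn₃ a b d fun x y z => congrArg (Quotient.mk c.setoid) (inf_assoc x y z)

theorem quo_sup_inf_self (a b : c.Quo) : a ⊔ a ⊓ b = a :=
  Quotient.inductionOn₂ a b fun x y =>
    congrArg (Quotient.mk c.setoid) (sup_inf_self (a := x) (b := y))

theorem quo_inf_sup_self (a b : c.Quo) : a ⊓ (a ⊔ b) = a :=
  Quotient.inductionOn₂ a b fun x y =>
    congrArg (Quotient.mk c.setoid) (inf_sup_self (a := x) (b := y))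

/-- The quotient lattice `L/Θ`. -/
instance : Lattice c.Quo :=
  Lattice.mk' c.quo_sup_comm c.quo_sup_assoc c.quo_inf_comm c.quo_inf_assoc
    c.quo_sup_inf_self c.quo_inf_sup_self

end LatticeCon'

open LatticeCon' in
/-- A finite lattice is congruence-uniform if `j ↦ con(j₊, j)` is a bijection from
join-irreducibles of `L` onto join-irreducibles of `Con(L)`, and dually
`m ↦ con(m, m⁺)` is a bijection from meet-irreducibles of `L` onto
meet-irreducibles of `Con(L)`. -/
def IsCongruenceUniform (L : Type u) [Lattice L] : Prop :=
  (∀ j : L, SupIrred j → ∀ a : L, a ⋖ j → SupIrred (conGen a j)) ∧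
  (∀ j j' a a' : L, SupIrred j → SupIrred j' → a ⋖ j → a' ⋖ j' →
      conGen a j = conGen a' j' → j = j') ∧
  (∀ Θ : LatticeCon' L, SupIrred Θ → ∃ j a : L, SupIrred j ∧ a ⋖ j ∧ conGen a j = Θ) ∧
  (∀ m : L, InfIrred m → ∀ b : L, m ⋖ b → InfIrred (conGen m b)) ∧
  (∀ m m' b b' : L, InfIrred m → InfIrred m' → m ⋖ b → m' ⋖ b' →
      conGen m b = conGen m' b' → m = m') ∧
  (∀ Θ : LatticeCon' L, InfIrred Θ → ∃ m b : L, InfIrred m ∧ m ⋖ b ∧ conGen m b = Θ)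

/-- `C` is a maximal chain of the closed interval `[a, b]`. -/
def IsMaxChainIn {L : Type u} [Lattice L] (a b : L) (C : Set L) : Prop :=
  C ⊆ Set.Icc a b ∧ IsChain (· ≤ ·) C ∧
    ∀ D : Set L, D ⊆ Set.Icc a b → IsChain (· ≤ ·) D → C ⊆ D → C = D

/-- `u` and `v` are consecutive elements of the chain `C` (the covering pairs of `C`
viewed as a poset in its own right). -/
def ConsecIn {L : Type u} [Lattice L] (C : Set L) (u v : L) : Prop :=
  u ∈ C ∧ v ∈ C ∧ u < v ∧ ∀ w ∈ C, ¬(u < w ∧ w < v)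

/-- `lam` is a CN-labeling of the lattice `L` (with values in the poset `P`):
the defining conditions (CN1), (CN2), (CN3) hold in `L` and in its order-dual. -/
def IsCNLabeling {L : Type u} [Lattice L] {P : Type v} [PartialOrder P]
    (lam : L → L → P) : Prop :=
  (∀ x y z : L, x ≠ y → z ⋖ x → z ⋖ y →
    ∀ C₁ C₂ : Set L, IsMaxChainIn z (x ⊔ y) C₁ → IsMaxChainIn z (x ⊔ y) C₂ →
      x ∈ C₁ → y ∈ C₂ →
      (∀ x' ∈ C₁, x' ⋖ (x ⊔ y) → lam x' (x ⊔ y) = lam z y) ∧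
      (∀ y' ∈ C₂, y' ⋖ (x ⊔ y) → lam y' (x ⊔ y) = lam z x) ∧
      (∀ u v : L, ConsecIn C₁ u v → z < u → v < x ⊔ y →
        lam z x < lam u v ∧ lam z y < lam u v) ∧
      (∀ u v u' v' : L, ConsecIn C₁ u v → ConsecIn C₁ u' v' →
        lam u v = lam u' v' → u = u' ∧ v = v')) ∧
  (∀ x y z : L, x ≠ y → x ⋖ z → y ⋖ z →
    ∀ C₁ C₂ : Set L, IsMaxChainIn (x ⊓ y) z C₁ → IsMaxChainIn (x ⊓ y) z C₂ →
      x ∈ C₁ → y ∈ C₂ →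
      (∀ x' ∈ C₁, (x ⊓ y) ⋖ x' → lam (x ⊓ y) x' = lam y z) ∧
      (∀ y' ∈ C₂, (x ⊓ y) ⋖ y' → lam (x ⊓ y) y' = lam x z) ∧
      (∀ u v : L, ConsecIn C₁ u v → x ⊓ y < u → v < z →
        lam x z < lam u v ∧ lam y z < lam u v) ∧
      (∀ u v u' v' : L, ConsecIn C₁ u v → ConsecIn C₁ u' v' →
        lam u v = lam u' v' → u = u' ∧ v = v'))

/-- `lam` is a CU-labeling of the lattice `L`: a CN-labeling satisfying (CU1), (CU2). -/
def IsCULabeling {L : Type u} [Lattice L] {P : Type v} [PartialOrder P]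
    (lam : L → L → P) : Prop :=
  IsCNLabeling lam ∧
  (∀ j j' a a' : L, SupIrred j → SupIrred j' → a ⋖ j → a' ⋖ j' → j ≠ j' →
    lam a j ≠ lam a' j') ∧
  (∀ m m' b b' : L, InfIrred m → InfIrred m' → m ⋖ b → m' ⋖ b' → m ≠ m' →
    lam m b ≠ lam m' b')

/-- `λ↓(x)`: the set of labels of covering pairs below `x`. -/
def lamDown {L : Type u} [Lattice L] {P : Type v} (lam : L → L → P) (x : L) : Set P :=
  {p | ∃ y, y ⋖ x ∧ lam y x = p}

/-- `λ↑(x)`: the set of labels of covering pairs above `x`. -/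
def lamUp {L : Type u} [Lattice L] {P : Type v} (lam : L → L → P) (x : L) : Set P :=
  {p | ∃ y, x ⋖ y ∧ lam x y = p}

/-- Covering pairs `(x, y)` and `(w, z)` are associates. -/
def AreAssociates {L : Type u} [Lattice L] (x y w z : L) : Prop :=
  (y ⊓ w = x ∧ y ⊔ w = z) ∨ (x ⊓ z = w ∧ x ⊔ z = y)

/-- `x = ⋁ A` is the canonical join-representation of `x`. -/
def IsCanonicalJoinRep {L : Type u} [Lattice L] (A : Set L) (x : L) : Prop :=
  (∀ a ∈ A, SupIrred a) ∧ IsLUB A x ∧ (∀ B ⊂ A, ¬IsLUB B x) ∧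
    ∀ B : Set L, (∀ b ∈ B, SupIrred b) → IsLUB B x → (∀ B' ⊂ B, ¬IsLUB B' x) →
      ∀ a ∈ A, ∃ b ∈ B, a ≤ b

/-- `x = ⋀ A` is the canonical meet-representation of `x`. -/
def IsCanonicalMeetRep {L : Type u} [Lattice L] (A : Set L) (x : L) : Prop :=
  (∀ a ∈ A, InfIrred a) ∧ IsGLB A x ∧ (∀ B ⊂ A, ¬IsGLB B x) ∧
    ∀ B : Set L, (∀ b ∈ B, InfIrred b) → IsGLB B x → (∀ B' ⊂ B, ¬IsGLB B' x) →
      ∀ a ∈ A, ∃ b ∈ B, b ≤ a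

theorem mkQ_eq_iff_aux {L : Type u} [Lattice L] (c : LatticeCon' L) {a b : L} :
    c.mkQ a = c.mkQ b ↔ c.r a b :=
  ⟨Quotient.exact, Quot.sound⟩

theorem mkQ_sup_aux {L : Type u} [Lattice L] (c : LatticeCon' L) (a b : L) :
    c.mkQ a ⊔ c.mkQ b = c.mkQ (a ⊔ b) := rfl

theorem mkQ_le_iff_aux {L : Type u} [Lattice L] (c : LatticeCon' L) {a b : L} :
    c.mkQ a ≤ c.mkQ b ↔ c.r (a ⊔ b) b := by
  rw [← sup_eq_right]; exact mkQ_eq_iff_aux c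

theorem mkQ_mono_aux {L : Type u} [Lattice L] (c : LatticeCon' L) {a b : L} (h : a ≤ b) :
    c.mkQ a ≤ c.mkQ b := by
  rw [mkQ_le_iff_aux c, sup_eq_right.mpr h]; exact c.refl b

/-- If `x` is the greatest element of its congruence class, then every
covering pair `([x], [y])` in the quotient lattice is represented by a unique
cover `x ⋖ y'` with `y'` in the class of `y`. -/
theorem max_of_class_unique_cover_above
    {L : Type u} [Lattice L] [Fintype L] (c : LatticeCon' L)
    {x : L} (hx : ∀ z : L, c.r x z → z ≤ x)
    (y : L) (hcov : c.mkQ x ⋖ c.mkQ y) :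
    ∃! y' : L, c.r y y' ∧ x ⋖ y' := by
  have hxlt : x < x ⊔ y := by
    rcases (le_sup_left : x ≤ x ⊔ y).lt_or_eq with h | h
    · exact h
    · exfalso
      have : c.mkQ y ≤ c.mkQ x := by
        rw [mkQ_le_iff_aux c, sup_comm y x, ← h]
        exact c.refl x
      exact absurd (this.trans_lt hcov.lt) (lt_irrefl _)
  obtain ⟨y', hxy', hy'le⟩ := exists_covBy_le_of_lt hxlt
  have hle1 : c.mkQ x ≤ c.mkQ y' := mkQ_mono_aux c hxy'.le
  have hley : c.mkQ y' ≤ c.mkQ y := by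
    refine (mkQ_mono_aux c hy'le).trans ?_
    exact (sup_eq_right.mpr hcov.le).le
  have hne : c.mkQ y' ≠ c.mkQ x := by
    intro h
    have : y' ≤ x := hx y' (c.symm _ _ ((mkQ_eq_iff_aux c).mp h))
    exact absurd (this.trans_lt hxy'.lt) (lt_irrefl _)
  have heq : c.mkQ y' = c.mkQ y := by
    rcases hle1.lt_or_eq with h | h
    · exact hley.lt_or_eq.resolve_left (hcov.2 h)
    · exact absurd h.symm hne
  have hryy' : c.r y y' := c.symm _ _ ((mkQ_eq_iff_aux c).mp heq)
  refine ⟨y', ⟨hryy', hxy'⟩, ?_⟩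
  rintro z ⟨hrz, hxz⟩
  by_contra hzne
  have hrzy' : c.r z y' := c.trans _ _ _ (c.symm _ _ hrz) hryy'
  have hinf : z ⊓ y' = x := by
    rcases (le_inf hxz.le hxy'.le).lt_or_eq with h | h
    · have hz2 : z ⊓ y' = z := by
        rcases (inf_le_left : z ⊓ y' ≤ z).lt_or_eq with h2 | h2
        · exact absurd h2 (hxz.2 h)
        · exact h2
      have hzy' : z < y' := (hz2 ▸ (inf_le_right : z ⊓ y' ≤ y')).lt_of_ne hzne
      exact absurd hzy' (hxy'.2 hxz.lt)
    · exact h.symm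
  have hrxy' : c.r x y' := by
    have h := c.inf_congr z y' y' hrzy'
    rwa [hinf, inf_idem] at h
  exact absurd hxy'.lt ((hx y' hrxy').not_gt)
end

section
/- Let L be a finite lattice, Θ a lattice congruence of L, and y ∈ L the least element of its Θ-class. Then for every Θ-class [x]_Θ such that ([x]_Θ, [y]_Θ) is a covering pair of the quotient lattice L/Θ, there exists a unique x' ∈ [x]_Θ with x' ⋖ y in L. -/
universe u v

namespace LatticeCon'

variable {L : Type u} [Lattice L] (c : LatticeCon' L)

theorem mkQ_eq_iff {a b : L} : c.mkQ a = c.mkQ b ↔ c.r a b :=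
  ⟨Quotient.exact, fun h => Quotient.sound (a := a) (b := b) h⟩

theorem mkQ_sup' (a b : L) : c.mkQ a ⊔ c.mkQ b = c.mkQ (a ⊔ b) := rfl

theorem mkQ_inf' (a b : L) : c.mkQ a ⊓ c.mkQ b = c.mkQ (a ⊓ b) := rfl

theorem mkQ_le_iff {a b : L} : c.mkQ a ≤ c.mkQ b ↔ c.r (a ⊔ b) b := by
  rw [← sup_eq_right]; exact c.mkQ_eq_iff

theorem mkQ_mono {a b : L} (h : a ≤ b) : c.mkQ a ≤ c.mkQ b :=
  (c.mkQ_le_iff).mpr (by rw [sup_eq_right.mpr h]; exact c.refl b)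

end LatticeCon'

/-- If `y` is the least element of its congruence class, then every
covering pair `([x], [y])` in the quotient lattice is represented by a unique
cover `x' ⋖ y` with `x'` in the class of `x`. -/
theorem min_of_class_unique_cover_below
    {L : Type u} [Lattice L] [Fintype L] (c : LatticeCon' L)
    {y : L} (hy : ∀ z : L, c.r y z → y ≤ z)
    (x : L) (hcov : c.mkQ x ⋖ c.mkQ y) :
    ∃! x' : L, c.r x x' ∧ x' ⋖ y := by
  have hne : c.mkQ x ≠ c.mkQ y := hcov.lt.ne
  have hxley : c.mkQ x ≤ c.mkQ y := hcov.le
  -- c.r (x ⊓ y) x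
  have hax : c.r (x ⊓ y) x := by
    rw [← c.mkQ_eq_iff]; exact inf_eq_left.mpr hxley
  set a := x ⊓ y with ha
  have haley : a ≤ y := inf_le_right
  -- any z with a ≤ z < y is congruent to x
  have key : ∀ z : L, a ≤ z → z < y → c.r x z := by
    intro z h1 h2
    have hle1 : c.mkQ x ≤ c.mkQ z := by
      rw [← (c.mkQ_eq_iff).mpr hax]; exact c.mkQ_mono h1
    have hle2 : c.mkQ z ≤ c.mkQ y := c.mkQ_mono h2.le
    rcases eq_or_lt_of_le hle1 with heq | hlt1
    · exact (c.mkQ_eq_iff).mp heq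
    · rcases eq_or_lt_of_le hle2 with heq | hlt2
      · have : c.r y z := c.symm _ _ ((c.mkQ_eq_iff).mp heq)
        exact absurd (hy z this) (not_le_of_gt h2)
      · exact absurd hlt2 (hcov.2 hlt1)
  have haly : a < y := by
    rcases eq_or_lt_of_le haley with heq | h
    · exfalso
      exact hne ((c.mkQ_eq_iff).mpr (c.symm _ _ (heq ▸ hax)))
    · exact h
  -- pick a maximal element of {z | a ≤ z ∧ z < y}
  classical
  obtain ⟨m, hm, hmax⟩ := (Finset.univ.filter fun z : L => a ≤ z ∧ z < y).exists_maximal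
    ⟨a, by simp [haly]⟩
  simp only [Finset.mem_filter, Finset.mem_univ, true_and] at hm
  have hmcov : m ⋖ y := by
    refine ⟨hm.2, fun w hw1 hw2 => ?_⟩
    have : w ∈ Finset.univ.filter fun z : L => a ≤ z ∧ z < y := by
      simp [hm.1.trans hw1.le, hw2]
    exact absurd (hmax this hw1.le) (not_le_of_gt hw1)
  have hrm : c.r x m := key m hm.1 hm.2
  refine ⟨m, ⟨hrm, hmcov⟩, ?_⟩
  rintro w ⟨hrw, hwcov⟩
  by_contra hne'
  rcases eq_or_lt_of_le (le_sup_left : w ≤ w ⊔ m) with hs | hs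
  · have hmw : m ≤ w := le_sup_right.trans hs.ge
    rcases eq_or_lt_of_le hmw with heq | hlt
    · exact hne' heq.symm
    · exact hmcov.2 hlt hwcov.lt
  · have hsy : w ⊔ m ≤ y := sup_le hwcov.lt.le hmcov.lt.le
    have hsy' : w ⊔ m = y := by
      rcases eq_or_lt_of_le hsy with heq | hlt
      · exact heq
      · exact absurd hlt (hwcov.2 hs)
    have : c.r (w ⊔ m) (x ⊔ x) := c.sup_congr₂ (c.symm _ _ hrw) (c.symm _ _ hrm)
    rw [hsy', sup_idem] at this
    exact hne ((c.mkQ_eq_iff).mpr (c.symm _ _ this))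
end

section
/- Let L be a finite lattice with a CU-labeling λ : Cov(L) → P. Let x ≤ y in L and suppose y = a₁ ∨ ⋯ ∨ a_l for pairwise distinct elements a₁, …, a_l each of which covers x. Then there exist elements c₁, …, c_l each covered by y such that x = c₁ ∧ ⋯ ∧ c_l and λ(x, a_i) = λ(c_i, y) for all i. -/
universe u v

set_option linter.unusedSectionVars false
section CUAux

variable {L : Type u} [Lattice L] [Fintype L]

lemma covby_squeeze_top {a b w : L} (h : a ⋖ b) (h1 : a < w) (h2 : w ≤ b) : w = b := by
  rcases lt_or_eq_of_le h2 with h3 | h3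
  · exact absurd h3 (h.2 h1)
  · exact h3

lemma covby_squeeze_bot {a b w : L} (h : a ⋖ b) (h1 : a ≤ w) (h2 : w < b) : w = a := by
  rcases lt_or_eq_of_le h1 with h3 | h3
  · exact absurd h2 (h.2 h3)
  · exact h3.symm

lemma not_le_of_two_covers {x a b : L} (hne : a ≠ b) (ha : x ⋖ a) (hb : x ⋖ b) :
    ¬ a ≤ b := fun h => hb.2 ha.lt (lt_of_le_of_ne h hne)

lemma not_le_of_two_covers_top {x a b : L} (hne : a ≠ b) (ha : a ⋖ x) (hb : b ⋖ x) :
    ¬ a ≤ b := fun h => ha.2 (lt_of_le_of_ne h hne) hb.lt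

lemma exists_covby_le {x m : L} (h : x < m) : ∃ f, x ⋖ f ∧ f ≤ m := by
  obtain ⟨f, hf, hmin⟩ := Set.Finite.exists_minimalFor id {w | x < w ∧ w ≤ m}
    (Set.toFinite _) ⟨m, h, le_rfl⟩
  refine ⟨f, ⟨hf.1, fun c hc1 hc2 => ?_⟩, hf.2⟩
  have hcm : c ∈ {w | x < w ∧ w ≤ m} := ⟨hc1, hc2.le.trans hf.2⟩
  exact absurd (le_antisymm (hmin hcm hc2.le) hc2.le : f = c) (ne_of_gt hc2)

lemma exists_le_covby {x m : L} (h : x < m) : ∃ f, x ≤ f ∧ f ⋖ m := by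
  obtain ⟨f, hf, hmax⟩ := Set.Finite.exists_maximalFor id {w | x ≤ w ∧ w < m}
    (Set.toFinite _) ⟨x, le_rfl, h⟩
  refine ⟨f, hf.1, hf.2, fun c hc1 hc2 => ?_⟩
  have hcm : c ∈ {w | x ≤ w ∧ w < m} := ⟨hf.1.trans hc1.le, hc2⟩
  exact absurd (le_antisymm hc1.le (hmax hcm hc1.le) : f = c) (ne_of_lt hc1)

lemma exists_maxChainIn {z s w : L} (h1 : z ≤ w) (h2 : w ≤ s) :
    ∃ C, IsMaxChainIn z s C ∧ w ∈ C := by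
  obtain ⟨C, hC, hmax⟩ := Set.Finite.exists_maximalFor Set.ncard
      {D : Set L | D ⊆ Set.Icc z s ∧ IsChain (· ≤ ·) D ∧ w ∈ D} (Set.toFinite _)
      ⟨{w}, by
        refine ⟨?_, Set.subsingleton_singleton.isChain, rfl⟩
        intro c hc; rw [Set.mem_singleton_iff] at hc; subst hc; exact Set.mem_Icc.2 ⟨h1, h2⟩⟩
  refine ⟨C, ⟨hC.1, hC.2.1, fun D hD1 hD2 hCD => ?_⟩, hC.2.2⟩
  have hDmem : D ∈ {D : Set L | D ⊆ Set.Icc z s ∧ IsChain (· ≤ ·) D ∧ w ∈ D} :=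
    ⟨hD1, hD2, hCD hC.2.2⟩
  have hle : C.ncard ≤ D.ncard := Set.ncard_le_ncard hCD (Set.toFinite _)
  exact Set.eq_of_subset_of_ncard_le hCD (hmax hDmem hle) (Set.toFinite _)

lemma IsMaxChainIn.top_mem {z s : L} {C : Set L} (hC : IsMaxChainIn z s C)
    (hzs : z ≤ s) : s ∈ C := by
  have hsub : insert s C ⊆ Set.Icc z s := by
    rintro c (rfl | hc)
    · exact Set.mem_Icc.2 ⟨hzs, le_rfl⟩
    · exact hC.1 hc
  have hch : IsChain (· ≤ ·) (insert s C) :=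
    hC.2.1.insert fun b hb _ => Or.inr (Set.mem_Icc.1 (hC.1 hb)).2
  have h := hC.2.2 (insert s C) hsub hch (Set.subset_insert _ _)
  rw [h]; exact Set.mem_insert _ _

lemma IsMaxChainIn.bot_mem {z s : L} {C : Set L} (hC : IsMaxChainIn z s C)
    (hzs : z ≤ s) : z ∈ C := by
  have hsub : insert z C ⊆ Set.Icc z s := by
    rintro c (rfl | hc)
    · exact Set.mem_Icc.2 ⟨le_rfl, hzs⟩
    · exact hC.1 hc
  have hch : IsChain (· ≤ ·) (insert z C) :=
    hC.2.1.insert fun b hb _ => Or.inl (Set.mem_Icc.1 (hC.1 hb)).1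
  have h := hC.2.2 (insert z C) hsub hch (Set.subset_insert _ _)
  rw [h]; exact Set.mem_insert _ _

lemma IsMaxChainIn.exists_coatom {z s : L} {C : Set L} (hC : IsMaxChainIn z s C)
    (hzs : z < s) : ∃ t ∈ C, t ⋖ s ∧ ∀ d ∈ C, d ≠ s → d ≤ t := by
  have hzC := hC.bot_mem hzs.le
  obtain ⟨t, htC', hmax⟩ := Set.Finite.exists_maximalFor id (C \ {s}) (Set.toFinite _)
    ⟨z, hzC, fun h => (ne_of_lt hzs) (Set.mem_singleton_iff.1 h)⟩
  have hall : ∀ d ∈ C, d ≠ s → d ≤ t := by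
    intro d hd hds
    rcases eq_or_ne d t with rfl | hdt
    · exact le_rfl
    · rcases hC.2.1 hd htC'.1 hdt with h | h
      · exact h
      · exact (hmax ⟨hd, fun hh => hds (Set.mem_singleton_iff.1 hh)⟩ h)
  have htne : t ≠ s := fun h => htC'.2 (Set.mem_singleton_iff.2 h)
  have htlt : t < s := lt_of_le_of_ne (Set.mem_Icc.1 (hC.1 htC'.1)).2 htne
  refine ⟨t, htC'.1, ⟨htlt, fun c hc1 hc2 => ?_⟩, hall⟩
  have hsub : insert c C ⊆ Set.Icc z s := by
    rintro d (rfl | hd)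
    · exact Set.mem_Icc.2 ⟨le_trans (Set.mem_Icc.1 (hC.1 htC'.1)).1 hc1.le, hc2.le⟩
    · exact hC.1 hd
  have hch : IsChain (· ≤ ·) (insert c C) := hC.2.1.insert (fun b hb _ => by
    rcases eq_or_ne b s with rfl | hbs
    · exact Or.inl hc2.le
    · exact Or.inr ((hall b hb hbs).trans hc1.le))
  have h := hC.2.2 _ hsub hch (Set.subset_insert _ _)
  have hcC : c ∈ C := h ▸ Set.mem_insert _ _
  exact (hall c hcC (ne_of_lt hc2)).not_gt hc1

lemma IsMaxChainIn.exists_atom {z s : L} {C : Set L} (hC : IsMaxChainIn z s C)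
    (hzs : z < s) : ∃ t ∈ C, z ⋖ t ∧ ∀ d ∈ C, d ≠ z → t ≤ d := by
  have hsC := hC.top_mem hzs.le
  obtain ⟨t, htC', hmin⟩ := Set.Finite.exists_minimalFor id (C \ {z}) (Set.toFinite _)
    ⟨s, hsC, fun h => (ne_of_gt hzs) (Set.mem_singleton_iff.1 h)⟩
  have hall : ∀ d ∈ C, d ≠ z → t ≤ d := by
    intro d hd hdz
    rcases eq_or_ne d t with rfl | hdt
    · exact le_rfl
    · rcases hC.2.1 hd htC'.1 hdt with h | h
      · exact (hmin ⟨hd, fun hh => hdz (Set.mem_singleton_iff.1 hh)⟩ h)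
      · exact h
  have htne : t ≠ z := fun h => htC'.2 (Set.mem_singleton_iff.2 h)
  have htgt : z < t := lt_of_le_of_ne (Set.mem_Icc.1 (hC.1 htC'.1)).1 (Ne.symm htne)
  refine ⟨t, htC'.1, ⟨htgt, fun c hc1 hc2 => ?_⟩, hall⟩
  have hsub : insert c C ⊆ Set.Icc z s := by
    rintro d (rfl | hd)
    · exact Set.mem_Icc.2 ⟨hc1.le, le_trans hc2.le (Set.mem_Icc.1 (hC.1 htC'.1)).2⟩
    · exact hC.1 hd
  have hch : IsChain (· ≤ ·) (insert c C) := hC.2.1.insert (fun b hb _ => by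
    rcases eq_or_ne b z with rfl | hbz
    · exact Or.inr hc1.le
    · exact Or.inl (hc2.le.trans (hall b hb hbz)))
  have h := hC.2.2 _ hsub hch (Set.subset_insert _ _)
  have hcC : c ∈ C := h ▸ Set.mem_insert _ _
  exact (hall c hcC (ne_of_gt hc1)).not_gt hc2

lemma infIrred_of_unique_cover {μ e : L} (h : μ ⋖ e) (hu : ∀ e', μ ⋖ e' → e' = e) :
    InfIrred μ := by
  refine ⟨h.lt.not_isMax, fun b c hbc => ?_⟩
  by_contra hcon
  push_neg at hcon
  obtain ⟨hb, hc⟩ := hcon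
  have hμb : μ < b := lt_of_le_of_ne (hbc ▸ inf_le_left) (Ne.symm hb)
  have hμc : μ < c := lt_of_le_of_ne (hbc ▸ inf_le_right) (Ne.symm hc)
  obtain ⟨w, hw, hwb⟩ := exists_covby_le hμb
  obtain ⟨w', hw', hw'c⟩ := exists_covby_le hμc
  have heb : e ≤ b := by rw [← hu w hw]; exact hwb
  have hec : e ≤ c := by rw [← hu w' hw']; exact hw'c
  have : e ≤ μ := hbc ▸ le_inf heb hec
  exact absurd this (not_le_of_gt h.lt)

lemma supIrred_of_unique_cover {jm j : L} (h : jm ⋖ j) (hu : ∀ w, w ⋖ j → w = jm) :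
    SupIrred j := by
  refine ⟨h.lt.not_isMin, fun b c hbc => ?_⟩
  by_contra hcon
  push_neg at hcon
  obtain ⟨hb, hc⟩ := hcon
  have hbj : b < j := lt_of_le_of_ne (hbc ▸ le_sup_left) hb
  have hcj : c < j := lt_of_le_of_ne (hbc ▸ le_sup_right) hc
  obtain ⟨w, hwb, hw⟩ := exists_le_covby hbj
  obtain ⟨w', hw'c, hw'⟩ := exists_le_covby hcj
  have hbm : b ≤ jm := by rw [← hu w hw]; exact hwb
  have hcm : c ≤ jm := by rw [← hu w' hw']; exact hw'c
  have : j ≤ jm := hbc ▸ sup_le hbm hcm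
  exact absurd this (not_le_of_gt h.lt)

end CUAux

section Transport

variable {L : Type u} [Lattice L] [Fintype L] {P : Type v} [PartialOrder P]
  {lam : L → L → P}

lemma transportUp (hCN : IsCNLabeling lam) :
    ∀ (n : ℕ) (u v : L), {w | u < w}.ncard ≤ n → u ⋖ v →
    ∃ μ e, μ ⋖ e ∧ (∀ e', μ ⋖ e' → e' = e) ∧ u ≤ μ ∧ v ⊔ μ = e ∧ lam μ e = lam u v := by
  intro n
  induction n with
  | zero =>
    intro u v hn huv
    exfalso
    have h0 : 0 < ({w | u < w} : Set L).ncard :=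
      (Set.ncard_pos (Set.toFinite _)).2 ⟨v, huv.lt⟩
    omega
  | succ n ih =>
    intro u v hn huv
    by_cases hcase : ∀ v', u ⋖ v' → v' = v
    · exact ⟨u, v, huv, hcase, le_rfl, sup_eq_left.2 huv.le, rfl⟩
    · push_neg at hcase
      obtain ⟨v', hv', hne⟩ := hcase
      obtain ⟨C₁, hC₁, hv'C₁⟩ := exists_maxChainIn (z := u) (s := v' ⊔ v) hv'.le le_sup_left
      obtain ⟨C₂, hC₂, hvC₂⟩ := exists_maxChainIn (z := u) (s := v' ⊔ v) huv.le le_sup_right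
      have key := (hCN.1 v' v u hne hv' huv C₁ C₂ hC₁ hC₂ hv'C₁ hvC₂).1
      obtain ⟨t, htC₁, htcov, hall⟩ := hC₁.exists_coatom (lt_of_lt_of_le hv'.lt le_sup_left)
      have hv's : v' ≠ v' ⊔ v := fun h =>
        (not_le_of_two_covers (Ne.symm hne) huv hv') (le_sup_right.trans h.ge)
      have hv't : v' ≤ t := hall v' hv'C₁ hv's
      have hut : u < t := lt_of_lt_of_le hv'.lt hv't
      have hlab_t : lam t (v' ⊔ v) = lam u v := key t htC₁ htcov
      have hmeas : {w | t < w}.ncard < {w | u < w}.ncard := by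
        apply Set.ncard_lt_ncard _ (Set.toFinite _)
        rw [Set.ssubset_def]
        exact ⟨fun w hw => hut.trans hw, fun h => lt_irrefl t (h hut)⟩
      obtain ⟨μ, e, hμe, huniq, htμ, hsμ, hlab'⟩ := ih t (v' ⊔ v) (by omega) htcov
      refine ⟨μ, e, hμe, huniq, le_trans (le_trans hv'.le hv't) htμ, ?_, by rw [hlab', hlab_t]⟩
      have hvnle : ¬ v ≤ μ := by
        intro h
        have h1 : v' ⊔ v ≤ μ := sup_le (hv't.trans htμ) h
        have h2 : (v' ⊔ v) ⊔ μ = μ := sup_eq_right.2 h1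
        rw [hsμ] at h2
        exact hμe.lt.ne' h2
      have h1 : μ < v ⊔ μ := lt_of_le_of_ne le_sup_right
        (fun h => hvnle (sup_eq_right.1 h.symm))
      have h2 : v ⊔ μ ≤ e := by
        rw [← hsμ]
        exact sup_le ((le_sup_right : v ≤ v' ⊔ v).trans le_sup_left) le_sup_right
      exact covby_squeeze_top hμe h1 h2

lemma transportDown (hCN : IsCNLabeling lam) :
    ∀ (n : ℕ) (u v : L), {w | w < u}.ncard ≤ n → u ⋖ v →
    ∃ j jm, jm ⋖ j ∧ (∀ w, w ⋖ j → w = jm) ∧ j ≤ v ∧ u ⊓ j = jm ∧ lam jm j = lam u v := by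
  intro n
  induction n with
  | zero =>
    intro u v hn huv
    by_cases hcase : ∀ u', u' ⋖ v → u' = u
    · exact ⟨v, u, huv, hcase, le_rfl, inf_eq_left.2 huv.le, rfl⟩
    · exfalso
      push_neg at hcase
      obtain ⟨u', hu', hne⟩ := hcase
      have hq : u' ⊓ u < u := lt_of_le_of_ne inf_le_right
        (fun h => (not_le_of_two_covers_top (Ne.symm hne) huv hu') (inf_eq_right.1 h))
      have h0 : 0 < ({w | w < u} : Set L).ncard :=
        (Set.ncard_pos (Set.toFinite _)).2 ⟨u' ⊓ u, hq⟩
      omega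
  | succ n ih =>
    intro u v hn huv
    by_cases hcase : ∀ u', u' ⋖ v → u' = u
    · exact ⟨v, u, huv, hcase, le_rfl, inf_eq_left.2 huv.le, rfl⟩
    · push_neg at hcase
      obtain ⟨u', hu', hne⟩ := hcase
      have hqu : u' ⊓ u < u := lt_of_le_of_ne inf_le_right
        (fun h => (not_le_of_two_covers_top (Ne.symm hne) huv hu') (inf_eq_right.1 h))
      have hqu' : u' ⊓ u < u' := lt_of_le_of_ne inf_le_left
        (fun h => (not_le_of_two_covers_top hne hu' huv) (inf_eq_left.1 h))
      obtain ⟨C₁, hC₁, hu'C₁⟩ := exists_maxChainIn (z := u' ⊓ u) (s := v) inf_le_left hu'.le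
      obtain ⟨C₂, hC₂, huC₂⟩ := exists_maxChainIn (z := u' ⊓ u) (s := v) inf_le_right huv.le
      have key := (hCN.2 u' u v hne hu' huv C₁ C₂ hC₁ hC₂ hu'C₁ huC₂).1
      obtain ⟨t, htC₁, htcov, hall⟩ := hC₁.exists_atom (lt_of_le_of_lt inf_le_left hu'.lt)
      have htu' : t ≤ u' := hall u' hu'C₁ (ne_of_gt hqu')
      have hlab_t : lam (u' ⊓ u) t = lam u v := key t htC₁ htcov
      have hmeas : {w | w < u' ⊓ u}.ncard < {w | w < u}.ncard := by
        apply Set.ncard_lt_ncard _ (Set.toFinite _)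
        rw [Set.ssubset_def]
        exact ⟨fun w hw => lt_trans hw hqu, fun h => lt_irrefl _ (h hqu)⟩
      obtain ⟨j, jm, hjmj, huniq, hjt, hqjm, hlab'⟩ := ih (u' ⊓ u) t (by omega) htcov
      refine ⟨j, jm, hjmj, huniq, hjt.trans (htu'.trans hu'.le), ?_, by rw [hlab', hlab_t]⟩
      have hjnu : ¬ j ≤ u := by
        intro h
        have h1 : j ≤ u' ⊓ u := le_inf (hjt.trans htu') h
        have h2 : (u' ⊓ u) ⊓ j = j := inf_eq_right.2 h1
        rw [hqjm] at h2
        exact hjmj.lt.ne h2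
      have h1 : jm ≤ u ⊓ j := by
        rw [← hqjm]
        exact inf_le_inf_right _ inf_le_right
      have h2 : u ⊓ j < j := lt_of_le_of_ne inf_le_right (fun h => hjnu (inf_eq_right.1 h))
      exact covby_squeeze_bot hjmj h1 h2

end Transport

/-- If `y` is the join of distinct elements `a₁, …, a_l` covering `x`,
then there are elements `c₁, …, c_l` covered by `y` whose meet is `x`, with
`λ(x, aᵢ) = λ(cᵢ, y)` for all `i`. -/
theorem cu_labeling_facial_interval
    {L : Type u} [Lattice L] [Fintype L] {P : Type v} [PartialOrder P]
    (lam : L → L → P) (hlam : IsCULabeling lam) {x y : L} (hxy : x ≤ y)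
    (A : Finset L) (hA : A.Nonempty) (hcov : ∀ a ∈ A, x ⋖ a)
    (hy : IsLUB (A : Set L) y) :
    ∃ g : L → L, (∀ a ∈ A, g a ⋖ y) ∧ IsGLB (g '' (A : Set L)) x ∧
      ∀ a ∈ A, lam x a = lam (g a) y := by
    classical
  obtain ⟨hCN, hCU1, hCU2⟩ := hlam
  by_cases hbase : ∃ a ∈ A, y ≤ a
  · -- degenerate case : y ∈ A, so A = {y} and x ⋖ y
    obtain ⟨a, haA, hya⟩ := hbase
    have hay : a = y := le_antisymm (hy.1 (Finset.mem_coe.2 haA)) hya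
    have hxy' : x ⋖ y := hay ▸ hcov a haA
    have hallA : ∀ b ∈ A, b = y := by
      intro b hbA
      by_contra hb
      have hblt : b < y := lt_of_le_of_ne (hy.1 (Finset.mem_coe.2 hbA)) hb
      exact hxy'.2 (hcov b hbA).lt hblt
    refine ⟨fun _ => x, fun a' ha' => hxy', ?_, fun a' ha' => by rw [hallA a' ha']⟩
    have himg : (fun _ : L => x) '' (A : Set L) = {x} := by
      ext p
      simp only [Set.mem_image, Set.mem_singleton_iff]
      constructor
      · rintro ⟨b, _, rfl⟩; rfl
      · rintro rfl
        exact ⟨hA.choose, Finset.mem_coe.2 hA.choose_spec, rfl⟩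
    rw [himg]
    exact isGLB_singleton
  · push_neg at hbase
    have hlt : ∀ a ∈ A, a < y :=
      fun a ha => lt_of_le_of_ne (hy.1 (Finset.mem_coe.2 ha)) (fun h => hbase a ha h.ge)
    have hex2 : ∀ a ∈ A, ∃ b ∈ A, b ≠ a := by
      intro a ha
      by_contra h
      push_neg at h
      exact hbase a ha (hy.2 (fun b hb => le_of_eq (h b (Finset.mem_coe.1 hb))))
    -- main construction
    have key : ∀ a ∈ A, ∃ c, c ⋖ y ∧ x ≤ c ∧ ¬ a ≤ c ∧ lam x a = lam c y := by
      intro a haA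
      have hxa : x ⋖ a := hcov a haA
      obtain ⟨μ, e, hμe, hμuniq, hxμ, haμe, hlabμ⟩ :=
        transportUp hCN ({w | x < w}.ncard) x a le_rfl hxa
      obtain ⟨j, jm, hjmj, hjuniq, hja, hxjm, hlabj⟩ :=
        transportDown hCN ({w | w < x}.ncard) x a le_rfl hxa
      have hμinf : InfIrred μ := infIrred_of_unique_cover hμe hμuniq
      have hjsup : SupIrred j := supIrred_of_unique_cover hjmj hjuniq
      have hμcommon : ∀ u v, u ⋖ v → lam u v = lam x a → u ≤ μ ∧ v ⊔ μ = e := by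
        intro u v huv hl
        obtain ⟨μ', e', hμe', huniq', huμ', hvμ', hlab'⟩ :=
          transportUp hCN ({w | u < w}.ncard) u v le_rfl huv
        have heq : μ' = μ := by
          by_contra hne
          exact hCU2 μ' μ e' e (infIrred_of_unique_cover hμe' huniq') hμinf hμe' hμe hne
            (by rw [hlab', hl, ← hlabμ])
        subst heq
        have he' : e' = e := hμuniq e' hμe'
        subst he'
        exact ⟨huμ', hvμ'⟩
      have hjcommon : ∀ u v, u ⋖ v → lam u v = lam x a → j ≤ v ∧ u ⊓ j = jm := by
        intro u v huv hl
        obtain ⟨j', jm', hj', huniq', hjv', hujm', hlab'⟩ :=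
          transportDown hCN ({w | w < u}.ncard) u v le_rfl huv
        have heq : j' = j := by
          by_contra hne
          exact hCU1 j' j jm' jm (supIrred_of_unique_cover hj' huniq') hjsup hj' hjmj hne
            (by rw [hlab', hl, ← hlabj])
        subst heq
        have hm' : jm' = jm := hjuniq jm' hj'
        subst hm'
        exact ⟨hjv', hujm'⟩
      -- a = x ⊔ j
      have hjnx : ¬ j ≤ x := fun h => hjmj.lt.ne' ((inf_eq_right.2 h).symm.trans hxjm)
      have haxj : x ⊔ j = a := by
        apply covby_squeeze_top hxa _ (sup_le hxa.le hja)
        exact lt_of_le_of_ne le_sup_left (fun h => hjnx (sup_eq_left.1 h.symm))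
      -- all other generators lie below μ
      obtain ⟨b₀, hb₀A, hb₀ne⟩ := hex2 a haA
      have herase : (A.erase a).Nonempty := ⟨b₀, Finset.mem_erase.2 ⟨hb₀ne, hb₀A⟩⟩
      have hbμ : ∀ b ∈ A.erase a, b ≤ μ := by
        intro b hb
        obtain ⟨hbne, hbA⟩ := Finset.mem_erase.1 hb
        have hxb : x ⋖ b := hcov b hbA
        have habne : a ≠ b := fun h => hbne h.symm
        obtain ⟨C₁, hC₁, haC₁⟩ := exists_maxChainIn (z := x) (s := a ⊔ b) hxa.le le_sup_left
        obtain ⟨C₂, hC₂, hbC₂⟩ := exists_maxChainIn (z := x) (s := a ⊔ b) hxb.le le_sup_right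
        have poly := (hCN.1 a b x habne hxa hxb C₁ C₂ hC₁ hC₂ haC₁ hbC₂).2.1
        obtain ⟨t, htC₂, htcov, hall⟩ := hC₂.exists_coatom (lt_of_lt_of_le hxa.lt le_sup_left)
        have hbt : b ≤ t := hall b hbC₂
          (fun h => (not_le_of_two_covers habne hxa hxb) (le_sup_left.trans h.ge))
        exact hbt.trans (hμcommon t (a ⊔ b) htcov (poly t htC₂ htcov)).1
      set ya := (A.erase a).sup' herase id with hya_def
      have hya_le_μ : ya ≤ μ := Finset.sup'_le _ _ hbμ
      have hx_le_ya : x ≤ ya :=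
        le_trans (hcov b₀ hb₀A).le (Finset.le_sup' id (Finset.mem_erase.2 ⟨hb₀ne, hb₀A⟩))
      have hya_le_y : ya ≤ y := Finset.sup'_le _ _
        (fun b hb => hy.1 (Finset.mem_coe.2 (Finset.mem_erase.1 hb).2))
      have hy_eq : a ⊔ ya = y := by
        apply le_antisymm (sup_le (hy.1 (Finset.mem_coe.2 haA)) hya_le_y)
        apply hy.2
        intro b hb
        rcases eq_or_ne b a with rfl | hne
        · exact le_sup_left
        · exact le_trans (Finset.le_sup' id (Finset.mem_erase.2 ⟨hne, Finset.mem_coe.1 hb⟩))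
            le_sup_right
      have hanμ : ¬ a ≤ μ := fun h => hμe.lt.ne' (haμe.symm.trans (sup_eq_right.2 h))
      -- climb inside [x, y]
      set S : Set L := {u | x ≤ u ∧ ∃ v, u ⋖ v ∧ v ≤ y ∧ lam u v = lam x a} with hS_def
      have hxS : x ∈ S := ⟨le_rfl, a, hxa, (hlt a haA).le, rfl⟩
      obtain ⟨u, huS, humax⟩ := Set.Finite.exists_maximalFor id S (Set.toFinite _) ⟨x, hxS⟩
      obtain ⟨hxu, v, huv, hvy, hlabuv⟩ := huS
      have hveq : v = y := by
        by_contra hne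
        have hvlt : v < y := lt_of_le_of_ne hvy hne
        have hq : ∀ w, u < w → w ≤ y → v ≤ w := by
          intro w h1 h2
          obtain ⟨w', hw'cov, hw'le⟩ := exists_covby_le h1
          rcases eq_or_ne w' v with rfl | hw'ne
          · exact hw'le
          · exfalso
            obtain ⟨C₁, hC₁, hw'C₁⟩ :=
              exists_maxChainIn (z := u) (s := w' ⊔ v) hw'cov.le le_sup_left
            obtain ⟨C₂, hC₂, hvC₂⟩ :=
              exists_maxChainIn (z := u) (s := w' ⊔ v) huv.le le_sup_right
            have poly := (hCN.1 w' v u hw'ne hw'cov huv C₁ C₂ hC₁ hC₂ hw'C₁ hvC₂).1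
            obtain ⟨t, htC₁, htcov, hall⟩ :=
              hC₁.exists_coatom (lt_of_lt_of_le hw'cov.lt le_sup_left)
            have hw't : w' ≤ t := hall w' hw'C₁ (fun h =>
              (not_le_of_two_covers (Ne.symm hw'ne) huv hw'cov) (le_sup_right.trans h.ge))
            have htS : t ∈ S := ⟨hxu.trans (hw'cov.le.trans hw't),
              w' ⊔ v, htcov, sup_le (hw'le.trans h2) hvy,
              (poly t htC₁ htcov).trans hlabuv⟩
            have hut : u < t := lt_of_lt_of_le hw'cov.lt hw't
            exact (not_le_of_gt hut) (humax htS hut.le)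
        obtain ⟨huμ, hvμe⟩ := hμcommon u v huv hlabuv
        obtain ⟨hjv, hujm⟩ := hjcommon u v huv hlabuv
        by_cases hyau : ya ≤ u
        · have hjnu : ¬ j ≤ u := fun h => hjmj.lt.ne' ((inf_eq_right.2 h).symm.trans hujm)
          have hv_eq : u ⊔ j = v := covby_squeeze_top huv
            (lt_of_le_of_ne le_sup_left (fun h => hjnu (sup_eq_left.1 h.symm)))
            (sup_le huv.le hjv)
          have hyv : y ≤ v := by
            rw [← hy_eq, ← haxj, ← hv_eq]
            exact sup_le (sup_le (hxu.trans le_sup_left) le_sup_right)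
              (hyau.trans le_sup_left)
          exact absurd hyv (not_le_of_gt hvlt)
        · have huw : u < u ⊔ ya :=
            lt_of_le_of_ne le_sup_left (fun h => hyau (sup_eq_left.1 h.symm))
          have hvw : v ≤ u ⊔ ya := hq (u ⊔ ya) huw (sup_le (huv.le.trans hvy) hya_le_y)
          have hvμ : v ≤ μ := hvw.trans (sup_le huμ hya_le_μ)
          have h2 : v ⊔ μ = μ := sup_eq_right.2 hvμ
          rw [hvμe] at h2
          exact hμe.lt.ne' h2
      refine ⟨u, hveq ▸ huv, hxu, ?_, (hveq ▸ hlabuv).symm⟩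
      exact fun h => hanμ (h.trans (hμcommon u v huv hlabuv).1)
    -- assemble
    choose! g hg using key
    refine ⟨g, fun a ha => (hg a ha).1, ⟨?_, ?_⟩, fun a ha => (hg a ha).2.2.2⟩
    · rintro p ⟨a, haA, rfl⟩
      exact (hg a (Finset.mem_coe.1 haA)).2.1
    · intro z hz
      have hzg : ∀ a ∈ A, z ≤ g a := fun a ha => hz ⟨a, Finset.mem_coe.2 ha, rfl⟩
      by_contra hzx
      have hxm : x < x ⊔ z := lt_of_le_of_ne le_sup_left (fun h => hzx (sup_eq_left.1 h.symm))
      obtain ⟨f, hxf, hfm⟩ := exists_covby_le hxm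
      have hfg : ∀ a ∈ A, f ≤ g a :=
        fun a ha => hfm.trans (sup_le (hg a ha).2.1 (hzg a ha))
      have hfA : f ∉ A := fun hfA => (hg f hfA).2.2.1 (hfg f hfA)
      obtain ⟨μf, ef, hμef, hufuniq, hxμf, hfμf, hlabf⟩ :=
        transportUp hCN ({w | x < w}.ncard) x f le_rfl hxf
      have hμfinf : InfIrred μf := infIrred_of_unique_cover hμef hufuniq
      have haμf : ∀ a ∈ A, a ≤ μf := by
        intro a haA
        have hxa : x ⋖ a := hcov a haA
        have hafne : a ≠ f := fun h => hfA (h ▸ haA)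
        obtain ⟨C₁, hC₁, haC₁⟩ := exists_maxChainIn (z := x) (s := a ⊔ f) hxa.le le_sup_left
        obtain ⟨C₂, hC₂, hfC₂⟩ := exists_maxChainIn (z := x) (s := a ⊔ f) hxf.le le_sup_right
        have poly := (hCN.1 a f x hafne hxa hxf C₁ C₂ hC₁ hC₂ haC₁ hfC₂).1
        obtain ⟨t, htC₁, htcov, hall⟩ := hC₁.exists_coatom (lt_of_lt_of_le hxa.lt le_sup_left)
        have hat : a ≤ t := hall a haC₁
          (fun h => (not_le_of_two_covers (Ne.symm hafne) hxf hxa) (le_sup_right.trans h.ge))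
        obtain ⟨μ', e', hμe', huniq', htμ', _, hlab'⟩ :=
          transportUp hCN ({w | t < w}.ncard) t (a ⊔ f) le_rfl htcov
        have heq : μ' = μf := by
          by_contra hne
          exact hCU2 μ' μf e' ef (infIrred_of_unique_cover hμe' huniq') hμfinf hμe' hμef hne
            (by rw [hlab', poly t htC₁ htcov, ← hlabf])
        exact hat.trans (heq ▸ htμ')
      have hyμf : y ≤ μf := hy.2 (fun b hb => haμf b (Finset.mem_coe.1 hb))
      obtain ⟨a₀, ha₀⟩ := hA
      have hfy : f ≤ y := (hfg a₀ ha₀).trans (hg a₀ ha₀).1.le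
      exact hμef.lt.ne' (hfμf.symm.trans (sup_eq_right.2 (hfy.trans hyμf)))
end
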